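/- Suppose for all t ∈ (0,T] and x,y ∈ D the function p^D satisfies C_1^{-1} q̃(t,x) q̃(t,y) ϱ^1(t,x-y) ≤ p^D(t,x,y) ≤ C_1 q̃(t,x) q̃(t,y) ϱ^1(t,x-y), where q̃(t,x) = min(1, ρ(x)^{α/2}/√t) and ϱ^1(t,w) = t/(|w|+t^{1/α})^{d+α}. Then there is a constant C > 0 such that for all 0 < s < t ≤ T and x, y, z ∈ D: p^D(t-s,x,z) · p^D(s,z,y) / p^D(t,x,y) ≤ C · ρ(z)^α · ( ϱ^0(t-s,x-z) + ϱ^0(s,z-y) ), where ϱ^0(u,w) = 1/(|w|+u^{1/α})^{d+α}. -/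

import Mathlib

open Metric

private lemma aux_min_sqrt_ratio (a u t : ℝ) (hu : 0 < u) (hut : u ≤ t) :
    min 1 (a / Real.sqrt u) ≤ Real.sqrt t / Real.sqrt u * min 1 (a / Real.sqrt t) := by
  have ht : 0 < t := lt_of_lt_of_le hu hut
  have hsu : 0 < Real.sqrt u := Real.sqrt_pos.2 hu
  have hst : 0 < Real.sqrt t := Real.sqrt_pos.2 ht
  rcases le_total a (Real.sqrt t) with h | h
  · rw [min_eq_right ((div_le_one hst).2 h)]
    have heq : Real.sqrt t / Real.sqrt u * (a / Real.sqrt t) = a / Real.sqrt u := by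
      field_simp
    rw [heq]
    exact min_le_right _ _
  · have h1 : min 1 (a / Real.sqrt t) = 1 :=
      min_eq_left ((one_le_div hst).2 h)
    rw [h1, mul_one]
    calc min 1 (a / Real.sqrt u) ≤ 1 := min_le_left _ _
      _ ≤ Real.sqrt t / Real.sqrt u :=
        (one_le_div hsu).2 (Real.sqrt_le_sqrt hut)

private lemma aux_add_rpow_le (u v p : ℝ) (hu : 0 ≤ u) (hv : 0 ≤ v) (hp : 1 ≤ p) :
    u ^ p + v ^ p ≤ (u + v) ^ p := by
  have hp0 : (0:ℝ) ≤ p - 1 := by linarith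
  have huv : 0 ≤ u + v := by linarith
  have h1 : u ^ p ≤ u * (u + v) ^ (p - 1) := by
    have : u ^ p = u * u ^ (p - 1) := by
      rw [show u ^ p = u ^ (1 + (p-1)) by ring_nf,
        Real.rpow_add' hu (by linarith : (1:ℝ) + (p-1) ≠ 0), Real.rpow_one]
    rw [this]
    exact mul_le_mul_of_nonneg_left
      (Real.rpow_le_rpow hu (by linarith) hp0) hu
  have h2 : v ^ p ≤ v * (u + v) ^ (p - 1) := by
    have : v ^ p = v * v ^ (p - 1) := by
      rw [show v ^ p = v ^ (1 + (p-1)) by ring_nf,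
        Real.rpow_add' hv (by linarith : (1:ℝ) + (p-1) ≠ 0), Real.rpow_one]
    rw [this]
    exact mul_le_mul_of_nonneg_left
      (Real.rpow_le_rpow hv (by linarith) hp0) hv
  calc u ^ p + v ^ p ≤ (u + v) * (u + v) ^ (p - 1) := by linarith [h1, h2]; 
    _ = (u + v) ^ p := by
        rw [show (u+v) * (u+v)^(p-1) = (u+v)^(1:ℝ) * (u+v)^(p-1) by rw [Real.rpow_one],
          ← Real.rpow_add' huv (by linarith : (1:ℝ) + (p-1) ≠ 0)]
        ring_nf


private lemma aux_eq (qx qy rz rα st su ss u v w PA PB : ℝ) (hsu : su ≠ 0) (hss : ss ≠ 0)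
    (hPA : PA ≠ 0) (hPB : PB ≠ 0) (hst : st * st = w) (h2 : su * su = u) (h3 : ss * ss = v)
    (h4 : rz * rz = rα) :
    st/su*qx * (rz/su) * (u/PA) * ((rz/ss) * (st/ss*qy) * (v/PB))
      = qx*qy*rα*(w * (1/PA * (1/PB))) := by
  subst hst h2 h3 h4; field_simp

set_option maxHeartbeats 1000000 in
theorem stmt_4 (d : ℕ) (hd : 2 ≤ d) (α : ℝ) (hα : 1 < α ∧ α < 2) (T : ℝ) (hT : 0 < T)
    (D : Set (EuclideanSpace ℝ (Fin d))) (hD : IsOpen D)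
    (pD : ℝ → EuclideanSpace ℝ (Fin d) → EuclideanSpace ℝ (Fin d) → ℝ)
    (C₁ : ℝ) (hC₁ : 1 < C₁)
    (hlow : ∀ t, 0 < t → t ≤ T → ∀ x ∈ D, ∀ y ∈ D,
      C₁⁻¹ * (min 1 ((infDist x Dᶜ) ^ (α/2) / Real.sqrt t)
        * min 1 ((infDist y Dᶜ) ^ (α/2) / Real.sqrt t)
        * (t / (‖x - y‖ + t ^ (1/α)) ^ ((d:ℝ) + α))) ≤ pD t x y)
    (hup : ∀ t, 0 < t → t ≤ T → ∀ x ∈ D, ∀ y ∈ D,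
      pD t x y ≤ C₁ * (min 1 ((infDist x Dᶜ) ^ (α/2) / Real.sqrt t)
        * min 1 ((infDist y Dᶜ) ^ (α/2) / Real.sqrt t)
        * (t / (‖x - y‖ + t ^ (1/α)) ^ ((d:ℝ) + α)))) :
    ∃ C > 0, ∀ (s t : ℝ), 0 < s → s < t → t ≤ T → ∀ x ∈ D, ∀ y ∈ D, ∀ z ∈ D,
      pD (t - s) x z * pD s z y / pD t x y
        ≤ C * (infDist z Dᶜ) ^ α *
            (1 / (‖x - z‖ + (t - s) ^ (1/α)) ^ ((d:ℝ) + α)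
              + 1 / (‖z - y‖ + s ^ (1/α)) ^ ((d:ℝ) + α)) := by
  obtain ⟨hα1, hα2⟩ := hα
  have hαpos : 0 < α := by linarith
  rcases Set.eq_empty_or_nonempty Dᶜ with hemp | hne
  · -- degenerate case: D = whole space, all infDists vanish, pD ≡ 0 on (0,T]
    refine ⟨1, one_pos, ?_⟩
    intro s t hs hst htT x hx y hy z hz
    have hzero : ∀ w : EuclideanSpace ℝ (Fin d), infDist w Dᶜ = 0 := by
      intro w; rw [hemp]; exact infDist_empty
    have hts : 0 < t - s := by linarith
    have hmin : ∀ u : ℝ, min 1 ((0:ℝ) ^ (α/2) / Real.sqrt u) = 0 := by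
      intro u
      rw [Real.zero_rpow (by positivity : α/2 ≠ 0), zero_div]
      simp
    have hpD1 : pD (t - s) x z = 0 := by
      have h1 := hup (t - s) hts (by linarith) x hx z hz
      have h2 := hlow (t - s) hts (by linarith) x hx z hz
      rw [hzero, hzero, hmin] at h1 h2
      simp at h1 h2
      linarith
    rw [hpD1, zero_mul, zero_div, hzero, Real.zero_rpow (ne_of_gt hαpos)]
    simp
  · -- main case
    have hρpos : ∀ w ∈ D, 0 < infDist w Dᶜ := by
      intro w hw
      exact (hD.isClosed_compl.notMem_iff_infDist_pos hne).1 (by simpa using hw)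
    set dα : ℝ := (d:ℝ) + α with hdα
    have hdαpos : 0 < dα := by positivity
    refine ⟨C₁ ^ 3 * 2 ^ dα, by positivity, ?_⟩
    intro s t hs hst htT x hx y hy z hz
    have hts : 0 < t - s := by linarith
    have ht : 0 < t := by linarith
    have hρx := hρpos x hx
    have hρy := hρpos y hy
    have hρz := hρpos z hz
    set ρx := infDist x Dᶜ
    set ρy := infDist y Dᶜ
    set ρz := infDist z Dᶜ
    set A : ℝ := ‖x - z‖ + (t - s) ^ (1/α) with hA
    set B : ℝ := ‖z - y‖ + s ^ (1/α) with hB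
    set Cd : ℝ := ‖x - y‖ + t ^ (1/α) with hCd
    have hApos : 0 < A := by positivity
    have hBpos : 0 < B := by positivity
    have hCpos : 0 < Cd := by positivity
    -- triangle + subadditivity of u ↦ u^(1/α)
    have hsub : t ^ (1/α) ≤ (t - s) ^ (1/α) + s ^ (1/α) := by
      set R : ℝ := (t - s) ^ (1/α) + s ^ (1/α) with hR
      have hRpos : 0 < R := by positivity
      have h := aux_add_rpow_le ((t-s)^(1/α)) (s^(1/α)) α (by positivity) (by positivity)
        (le_of_lt hα1)
      have e1 : ((t-s)^(1/α))^α = t - s := by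
        rw [← Real.rpow_mul hts.le, one_div, inv_mul_cancel₀ (ne_of_gt hαpos), Real.rpow_one]
      have e2 : ((s:ℝ)^(1/α))^α = s := by
        rw [← Real.rpow_mul hs.le, one_div, inv_mul_cancel₀ (ne_of_gt hαpos), Real.rpow_one]
      rw [e1, e2] at h
      have h2 : t ^ (1/α) ≤ (R ^ α) ^ (1/α) :=
        Real.rpow_le_rpow ht.le (by linarith) (by positivity)
      rwa [← Real.rpow_mul hRpos.le, mul_one_div, div_self (ne_of_gt hαpos),
        Real.rpow_one] at h2
    have htri : Cd ≤ A + B := by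
      have := norm_sub_le_norm_sub_add_norm_sub x z y
      rw [hA, hB, hCd]; linarith [hsub]
    -- 3P inequality
    have hAp : 0 < A ^ dα := Real.rpow_pos_of_pos hApos _
    have hBp : 0 < B ^ dα := Real.rpow_pos_of_pos hBpos _
    have hCp : 0 < Cd ^ dα := Real.rpow_pos_of_pos hCpos _
    have h3P : 1 / A ^ dα * (1 / B ^ dα) ≤ 2 ^ dα / Cd ^ dα * (1 / A ^ dα + 1 / B ^ dα) := by
      rcases le_total A B with hab | hab
      · have hle : Cd ^ dα ≤ 2 ^ dα * B ^ dα := by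
          rw [← Real.mul_rpow (by norm_num) hBpos.le]
          exact Real.rpow_le_rpow hCpos.le (by linarith) hdαpos.le
        have key : 1 / B ^ dα ≤ 2 ^ dα / Cd ^ dα := by
          rw [div_le_div_iff₀ hBp hCp, one_mul]; linarith
        calc 1 / A ^ dα * (1 / B ^ dα) ≤ 1 / A ^ dα * (2 ^ dα / Cd ^ dα) :=
              mul_le_mul_of_nonneg_left key (by positivity)
          _ = 2 ^ dα / Cd ^ dα * (1 / A ^ dα) := by ring
          _ ≤ 2 ^ dα / Cd ^ dα * (1 / A ^ dα + 1 / B ^ dα) := by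
              have : (0:ℝ) < 1 / B ^ dα := by positivity
              nlinarith [Real.rpow_pos_of_pos hCpos dα, Real.rpow_pos_of_pos (two_pos (α := ℝ)) dα]
      · have hle : Cd ^ dα ≤ 2 ^ dα * A ^ dα := by
          rw [← Real.mul_rpow (by norm_num) hApos.le]
          exact Real.rpow_le_rpow hCpos.le (by linarith) hdαpos.le
        have key : 1 / A ^ dα ≤ 2 ^ dα / Cd ^ dα := by
          rw [div_le_div_iff₀ hAp hCp, one_mul]; linarith
        calc 1 / A ^ dα * (1 / B ^ dα) ≤ 2 ^ dα / Cd ^ dα * (1 / B ^ dα) :=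
              mul_le_mul_of_nonneg_right key (by positivity)
          _ ≤ 2 ^ dα / Cd ^ dα * (1 / A ^ dα + 1 / B ^ dα) := by
              have : (0:ℝ) < 1 / A ^ dα := by positivity
              nlinarith [Real.rpow_pos_of_pos hCpos dα, Real.rpow_pos_of_pos (two_pos (α := ℝ)) dα]
    -- abbreviations for the time-t boundary factors
    set Qx : ℝ := min 1 (ρx ^ (α/2) / Real.sqrt t) with hQxdef
    set Qy : ℝ := min 1 (ρy ^ (α/2) / Real.sqrt t) with hQydef
    have hQxpos : 0 < Qx := lt_min one_pos (by positivity)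
    have hQypos : 0 < Qy := lt_min one_pos (by positivity)
    -- denominator is positive
    have hPlow := hlow t ht htT x hx y hy
    have hEtpos : 0 < C₁⁻¹ * (Qx * Qy * (t / Cd ^ dα)) := by
      have h0 : (0:ℝ) < C₁⁻¹ := inv_pos.2 (by linarith)
      have h1 : (0:ℝ) < t / Cd ^ dα := by positivity
      exact mul_pos h0 (mul_pos (mul_pos hQxpos hQypos) h1)
    have hPpos : 0 < pD t x y := lt_of_lt_of_le hEtpos hPlow
    -- numerator bounds
    have hn1 := hup (t - s) hts (by linarith) x hx z hz
    have hn2 := hup s hs (by linarith) z hz y hy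
    have hn1nn : 0 ≤ pD (t - s) x z := by
      refine le_trans ?_ (hlow (t - s) hts (by linarith) x hx z hz)
      have h0 : (0:ℝ) ≤ C₁⁻¹ := by positivity
      have h2 : (0:ℝ) ≤ min 1 (ρx ^ (α/2) / Real.sqrt (t - s)) := le_min (by norm_num) (by positivity)
      have h3 : (0:ℝ) ≤ min 1 (ρz ^ (α/2) / Real.sqrt (t - s)) := le_min (by norm_num) (by positivity)
      exact mul_nonneg h0 (mul_nonneg (mul_nonneg h2 h3) (by positivity))
    have hn2nn : 0 ≤ pD s z y := by
      refine le_trans ?_ (hlow s hs (by linarith) z hz y hy)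
      have h2 : (0:ℝ) ≤ min 1 (ρz ^ (α/2) / Real.sqrt s) := le_min (by norm_num) (by positivity)
      have h3 : (0:ℝ) ≤ min 1 (ρy ^ (α/2) / Real.sqrt s) := le_min (by norm_num) (by positivity)
      exact mul_nonneg (by positivity) (mul_nonneg (mul_nonneg h2 h3) (by positivity))
    rw [div_le_iff₀ hPpos]
    -- nonnegativity of constant times boundary term
    have hSnn : (0:ℝ) ≤ 1 / A ^ dα + 1 / B ^ dα := by positivity
    have hKnn : (0:ℝ) ≤ C₁ ^ 3 * 2 ^ dα * ρz ^ α * (1 / A ^ dα + 1 / B ^ dα) := by positivity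
    -- the q-factor comparison lemmas
    have hqx := aux_min_sqrt_ratio (ρx ^ (α/2)) (t - s) t hts (by linarith)
    have hqy := aux_min_sqrt_ratio (ρy ^ (α/2)) s t hs (by linarith)
    have hqz1 : min 1 (ρz ^ (α/2) / Real.sqrt (t - s)) ≤ ρz ^ (α/2) / Real.sqrt (t - s) :=
      min_le_right _ _
    have hqz2 : min 1 (ρz ^ (α/2) / Real.sqrt s) ≤ ρz ^ (α/2) / Real.sqrt s := min_le_right _ _
    have hsqts : (0:ℝ) < Real.sqrt (t - s) := Real.sqrt_pos.2 hts
    have hsqs : (0:ℝ) < Real.sqrt s := Real.sqrt_pos.2 hs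
    have hsqt : (0:ℝ) < Real.sqrt t := Real.sqrt_pos.2 ht
    -- step 1: bound the product of the two upper estimates
    have step1 : pD (t - s) x z * pD s z y ≤
        C₁ * (Real.sqrt t / Real.sqrt (t - s) * Qx * (ρz ^ (α/2) / Real.sqrt (t - s))
          * ((t - s) / A ^ dα))
        * (C₁ * (ρz ^ (α/2) / Real.sqrt s * (Real.sqrt t / Real.sqrt s * Qy) * (s / B ^ dα))) := by
      have b1 : pD (t - s) x z ≤
          C₁ * (Real.sqrt t / Real.sqrt (t - s) * Qx * (ρz ^ (α/2) / Real.sqrt (t - s))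
            * ((t - s) / A ^ dα)) := by
        refine le_trans hn1 ?_
        have hmm : min 1 (ρx ^ (α/2) / Real.sqrt (t - s))
            * min 1 (ρz ^ (α/2) / Real.sqrt (t - s)) * ((t - s) / A ^ dα)
            ≤ Real.sqrt t / Real.sqrt (t - s) * Qx * (ρz ^ (α/2) / Real.sqrt (t - s))
            * ((t - s) / A ^ dα) := by
          have h2 : (0:ℝ) ≤ min 1 (ρx ^ (α/2) / Real.sqrt (t - s)) := le_min (by norm_num) (by positivity)
          have h3 : (0:ℝ) ≤ min 1 (ρz ^ (α/2) / Real.sqrt (t - s)) := le_min (by norm_num) (by positivity)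
          gcongr
        exact mul_le_mul_of_nonneg_left hmm (by linarith)
      have b2 : pD s z y ≤
          C₁ * (ρz ^ (α/2) / Real.sqrt s * (Real.sqrt t / Real.sqrt s * Qy) * (s / B ^ dα)) := by
        refine le_trans hn2 ?_
        have hmm : min 1 (ρz ^ (α/2) / Real.sqrt s) * min 1 (ρy ^ (α/2) / Real.sqrt s)
            * (s / B ^ dα)
            ≤ ρz ^ (α/2) / Real.sqrt s * (Real.sqrt t / Real.sqrt s * Qy) * (s / B ^ dα) := by
          have h2 : (0:ℝ) ≤ min 1 (ρz ^ (α/2) / Real.sqrt s) := le_min (by norm_num) (by positivity)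
          have h3 : (0:ℝ) ≤ min 1 (ρy ^ (α/2) / Real.sqrt s) := le_min (by norm_num) (by positivity)
          gcongr
        exact mul_le_mul_of_nonneg_left hmm (by linarith)
      have hb1nn : 0 ≤ C₁ * (Real.sqrt t / Real.sqrt (t - s) * Qx * (ρz ^ (α/2) / Real.sqrt (t - s))
          * ((t - s) / A ^ dα)) := le_trans hn1nn b1
      exact mul_le_mul b1 b2 hn2nn hb1nn
    -- step 2: algebra + 3P
    have hsplit : ρz ^ (α/2) * ρz ^ (α/2) = ρz ^ α := by
      rw [← Real.rpow_add hρz]; ring_nf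
    have heq : Real.sqrt t / Real.sqrt (t - s) * Qx * (ρz ^ (α/2) / Real.sqrt (t - s))
          * ((t - s) / A ^ dα)
        * (ρz ^ (α/2) / Real.sqrt s * (Real.sqrt t / Real.sqrt s * Qy) * (s / B ^ dα))
        = Qx * Qy * ρz ^ α * (t * (1 / A ^ dα * (1 / B ^ dα))) := by
      have := aux_eq Qx Qy (ρz ^ (α/2)) (ρz ^ α) (Real.sqrt t) (Real.sqrt (t - s))
        (Real.sqrt s) (t - s) s t (A ^ dα) (B ^ dα) (ne_of_gt hsqts) (ne_of_gt hsqs)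
        (ne_of_gt hAp) (ne_of_gt hBp) (Real.mul_self_sqrt ht.le)
        (Real.mul_self_sqrt hts.le) (Real.mul_self_sqrt hs.le) hsplit
      linarith [this]
    have step2 : Real.sqrt t / Real.sqrt (t - s) * Qx * (ρz ^ (α/2) / Real.sqrt (t - s))
          * ((t - s) / A ^ dα)
        * (ρz ^ (α/2) / Real.sqrt s * (Real.sqrt t / Real.sqrt s * Qy) * (s / B ^ dα))
        ≤ 2 ^ dα * ρz ^ α * (1 / A ^ dα + 1 / B ^ dα) * (Qx * Qy * (t / Cd ^ dα)) := by
      rw [heq]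
      calc Qx * Qy * ρz ^ α * (t * (1 / A ^ dα * (1 / B ^ dα)))
          ≤ Qx * Qy * ρz ^ α * (t * (2 ^ dα / Cd ^ dα * (1 / A ^ dα + 1 / B ^ dα))) := by
            have hnn : (0:ℝ) ≤ Qx * Qy * ρz ^ α :=
              mul_nonneg (mul_nonneg hQxpos.le hQypos.le) (by positivity)
            have := mul_le_mul_of_nonneg_left h3P ht.le
            exact mul_le_mul_of_nonneg_left this hnn
        _ = 2 ^ dα * ρz ^ α * (1 / A ^ dα + 1 / B ^ dα) * (Qx * Qy * (t / Cd ^ dα)) := by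
            field_simp
    -- put everything together
    calc pD (t - s) x z * pD s z y
        ≤ C₁ * (Real.sqrt t / Real.sqrt (t - s) * Qx * (ρz ^ (α/2) / Real.sqrt (t - s))
            * ((t - s) / A ^ dα))
          * (C₁ * (ρz ^ (α/2) / Real.sqrt s * (Real.sqrt t / Real.sqrt s * Qy) * (s / B ^ dα))) :=
          step1
      _ = C₁ ^ 2 * (Real.sqrt t / Real.sqrt (t - s) * Qx * (ρz ^ (α/2) / Real.sqrt (t - s))
            * ((t - s) / A ^ dα)
          * (ρz ^ (α/2) / Real.sqrt s * (Real.sqrt t / Real.sqrt s * Qy) * (s / B ^ dα))) := by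
          ring
      _ ≤ C₁ ^ 2 * (2 ^ dα * ρz ^ α * (1 / A ^ dα + 1 / B ^ dα) * (Qx * Qy * (t / Cd ^ dα))) :=
          mul_le_mul_of_nonneg_left step2 (by positivity)
      _ = C₁ ^ 3 * 2 ^ dα * ρz ^ α * (1 / A ^ dα + 1 / B ^ dα)
            * (C₁⁻¹ * (Qx * Qy * (t / Cd ^ dα))) := by
          have hC0 : C₁ ≠ 0 := by linarith
          field_simp
      _ ≤ C₁ ^ 3 * 2 ^ dα * ρz ^ α * (1 / A ^ dα + 1 / B ^ dα) * pD t x y :=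
          mul_le_mul_of_nonneg_left hPlow hKnn
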